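/- Let γ ∈ (1/2, 1), set μ = 1/γ, let p_* > 0, let p_0 ≥ p_*, let (p_i)_{i≥0} satisfy p_{i+1} = γ(p_i − 1/2) for all i, and let k be a nonnegative integer such that γ < γ^{k+1} ( γ + 2(1−γ) p_0 ) ≤ 1. Then ∏_{i=0}^{k} (2 p_i)^{1/(2 γ^i p_0)} ≤ ( 1/(μ − 1) ) · μ^{ ( μ(2μ−1)/(μ−1)² ) · ( γ + 2(1−γ) p_* )/(2 p_*) }, a bound independent of k and of p_0. -/

import Mathlib

open Real

/-- Uniform bound, independent of `k` and `p_0`, for the accumulated polynomial factor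
`∏_{i=0}^{k} (2p_i)^{1/(2γ^i p_0)}` of the Moser iteration. -/
theorem stmt_16 (γ : ℝ) (hγ : γ ∈ Set.Ioo (1 / 2 : ℝ) 1) (μ : ℝ) (hμ : μ = 1 / γ)
    (pstar : ℝ) (hpstar : 0 < pstar)
    (p : ℕ → ℝ) (hp0 : pstar ≤ p 0)
    (hrec : ∀ i, p (i + 1) = γ * (p i - 1 / 2)) (k : ℕ)
    (hk1 : γ < γ ^ (k + 1) * (γ + 2 * (1 - γ) * p 0))
    (hk2 : γ ^ (k + 1) * (γ + 2 * (1 - γ) * p 0) ≤ 1) :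
    ∏ i ∈ Finset.range (k + 1), (2 * p i) ^ (1 / (2 * γ ^ i * p 0)) ≤
      (1 / (μ - 1)) *
        μ ^ ((μ * (2 * μ - 1) / (μ - 1) ^ 2) * (γ + 2 * (1 - γ) * pstar) / (2 * pstar)) := by
  obtain ⟨hγ1, hγ2⟩ := hγ
  have hγ0 : (0:ℝ) < γ := by linarith
  have h1γ : (0:ℝ) < 1 - γ := by linarith
  have hγne : γ ≠ 0 := ne_of_gt hγ0
  have h1γne : (1:ℝ) - γ ≠ 0 := ne_of_gt h1γ
  have hp0pos : (0:ℝ) < p 0 := lt_of_lt_of_le hpstar hp0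
  obtain ⟨b, hb⟩ : ∃ b : ℝ, b = γ / (1 - γ) := ⟨_, rfl⟩
  have hbpos : 0 < b := by rw [hb]; positivity
  have hb1 : 1 < b := by rw [hb, lt_div_iff₀ h1γ]; linarith
  obtain ⟨A, hA⟩ : ∃ A : ℝ, A = 2 * p 0 + b := ⟨_, rfl⟩
  have hApos : 0 < A := by rw [hA]; positivity
  -- closed form for the iterates
  have hclosed : ∀ i, 2 * p i = γ ^ i * A - b := by
    intro i
    induction i with
    | zero => rw [hA]; ring
    | succ n ih =>
      have hbb : γ * b + γ = b := by
        rw [hb]; field_simp; ring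
      rw [hrec n, pow_succ]
      linear_combination γ * ih - hbb
  -- hypotheses in terms of A
  have hAid : γ + 2 * (1 - γ) * p 0 = (1 - γ) * A := by
    rw [hA, hb]; field_simp; ring
  rw [hAid] at hk1 hk2
  have hw1 : 1 / (1 - γ) < γ ^ k * A := by
    rw [div_lt_iff₀ h1γ]
    have h : γ * 1 < γ * (γ ^ k * A * (1 - γ)) := by
      rw [pow_succ] at hk1; nlinarith [hk1]
    have := (mul_lt_mul_iff_right₀ hγ0).mp h
    linarith
  have hw2 : γ ^ k * A ≤ 1 / (γ * (1 - γ)) := by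
    rw [le_div_iff₀ (by positivity)]
    rw [pow_succ] at hk2; nlinarith [hk2]
  -- positivity of the iterates up to k
  have hb'' : 1 + b = 1 / (1 - γ) := by
    rw [hb]; field_simp; ring
  have h2pi : ∀ i, i ≤ k → 1 < 2 * p i := by
    intro i hik
    have h1 : γ ^ k * A ≤ γ ^ i * A :=
      mul_le_mul_of_nonneg_right (pow_le_pow_of_le_one hγ0.le hγ2.le hik) hApos.le
    rw [hclosed i]
    linarith [hw1, h1, hb'']
  -- key abbreviations
  obtain ⟨d, hd⟩ : ∃ d : ℝ, d = 2 * γ ^ k * p 0 := ⟨_, rfl⟩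
  have hdpos : 0 < d := by rw [hd]; positivity
  have hdne : d ≠ 0 := ne_of_gt hdpos
  obtain ⟨x, hx⟩ : ∃ x : ℝ, x = γ ^ (k + 1) := ⟨_, rfl⟩
  have hx0 : 0 < x := by rw [hx]; positivity
  have hx1 : x < 1 := by rw [hx]; exact pow_lt_one₀ hγ0.le hγ2 (Nat.succ_ne_zero k)
  obtain ⟨lγ, hlγ⟩ : ∃ l : ℝ, l = Real.log γ := ⟨_, rfl⟩
  have hlγneg : lγ < 0 := by rw [hlγ]; exact log_neg hγ0 hγ2
  obtain ⟨Lb, hLb⟩ : ∃ l : ℝ, l = Real.log b := ⟨_, rfl⟩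
  have hLbpos : 0 < Lb := by rw [hLb]; exact log_pos hb1
  obtain ⟨Lw, hLw⟩ : ∃ l : ℝ, l = Real.log (γ ^ k * A) := ⟨_, rfl⟩
  have hLwle : Lw ≤ Lb + 2 * (-lγ) := by
    have h1 : Lw ≤ Real.log (1 / (γ * (1 - γ))) := by
      rw [hLw]
      exact (Real.log_le_log_iff (by positivity) (by positivity)).mpr hw2
    have h2 : Real.log (1 / (γ * (1 - γ))) = -(Real.log γ + Real.log (1 - γ)) := by
      rw [one_div, Real.log_inv, Real.log_mul hγne h1γne]
    have h3 : Lb = Real.log γ - Real.log (1 - γ) := by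
      rw [hLb, hb, Real.log_div hγne h1γne]
    rw [hlγ]; linarith
  have h2p0 : 2 * p 0 = A - b := by rw [hA]; ring
  have hgb : γ ^ k * b = x / (1 - γ) := by
    rw [hx, hb, pow_succ]; field_simp
  have hdeq : d = γ ^ k * A - x / (1 - γ) := by
    linear_combination hd + γ ^ k * h2p0 - hgb
  have hdlow : (1 - x) / (1 - γ) < d := by
    have hsplit : (1 - x) / (1 - γ) = 1 / (1 - γ) - x / (1 - γ) := by ring
    rw [hdeq, hsplit]; linarith [hw1]
  have hdx : 1 - x ≤ (1 - γ) * d := by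
    rw [div_lt_iff₀ h1γ] at hdlow; linarith
  obtain ⟨Q, hQ⟩ : ∃ q : ℝ, q = γ / (2 * pstar) := ⟨_, rfl⟩
  have hQd : x ≤ Q * d := by
    have h1 : x / d = γ / (2 * p 0) := by
      rw [hx, hd, pow_succ]; field_simp
    have h2 : γ / (2 * p 0) ≤ Q := by
      rw [hQ]
      apply div_le_div_of_nonneg_left hγ0.le (by positivity)
      linarith
    calc x = x / d * d := by field_simp
      _ = γ / (2 * p 0) * d := by rw [h1]
      _ ≤ Q * d := mul_le_mul_of_nonneg_right h2 hdpos.le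
  -- the main sum bound
  have hsum_le : ∑ i ∈ Finset.range (k + 1), 1 / (2 * γ ^ i * p 0) * Real.log (γ ^ i * A)
      ≤ Lb + (2 - γ) / (1 - γ) ^ 2 * ((1 - γ) + Q) * (-lγ) := by
    have hreflect := Finset.sum_range_reflect
      (fun i => 1 / (2 * γ ^ i * p 0) * Real.log (γ ^ i * A)) (k + 1)
    rw [← hreflect]
    simp only [Nat.add_sub_cancel]
    have hterm : ∀ j ∈ Finset.range (k + 1),
        1 / (2 * γ ^ (k - j) * p 0) * Real.log (γ ^ (k - j) * A)
          = 1 / d * Lw * γ ^ j + 1 / d * (-lγ) * ((j : ℝ) * γ ^ j) := by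
      intro j hj
      have hjk : j ≤ k := Nat.lt_succ_iff.mp (Finset.mem_range.mp hj)
      have hpow : γ ^ (k - j) * γ ^ j = γ ^ k := by
        rw [← pow_add, Nat.sub_add_cancel hjk]
      have hlog1 : Real.log (γ ^ (k - j) * A) = ((k : ℝ) - (j : ℝ)) * lγ + Real.log A := by
        rw [Real.log_mul (pow_ne_zero _ hγne) (ne_of_gt hApos), Real.log_pow, hlγ,
          Nat.cast_sub hjk]
      have hlog2 : Lw = (k : ℝ) * lγ + Real.log A := by
        rw [hLw, Real.log_mul (pow_ne_zero _ hγne) (ne_of_gt hApos), Real.log_pow, hlγ]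
      have hXd : d = 2 * γ ^ (k - j) * p 0 * γ ^ j := by
        rw [hd]; linear_combination (-2 : ℝ) * p 0 * hpow
      have hcoef : 1 / (2 * γ ^ (k - j) * p 0) = γ ^ j * (1 / d) := by
        rw [hXd]
        have hX : (2 : ℝ) * γ ^ (k - j) * p 0 ≠ 0 := by positivity
        field_simp
      rw [hlog1, hcoef, hlog2]; ring
    rw [Finset.sum_congr rfl hterm, Finset.sum_add_distrib, ← Finset.mul_sum, ← Finset.mul_sum]
    have hG : ∑ j ∈ Finset.range (k + 1), γ ^ j = (1 - x) / (1 - γ) := by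
      rw [geom_sum_eq (ne_of_lt hγ2), hx,
        div_eq_div_iff (sub_ne_zero.mpr (ne_of_lt hγ2)) h1γne]
      ring
    have hH : ∑ j ∈ Finset.range (k + 1), (j : ℝ) * γ ^ j ≤ γ / (1 - γ) ^ 2 := by
      have hnorm : ‖γ‖ < 1 := by rw [Real.norm_eq_abs, abs_of_pos hγ0]; exact hγ2
      exact sum_le_hasSum _ (fun j _ => by positivity)
        (hasSum_coe_mul_geometric_of_norm_lt_one hnorm)
    rw [hG]
    have hc : (0:ℝ) ≤ 1 / d * (-lγ) := by
      apply mul_nonneg (by positivity); linarith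
    have hstep1 := add_le_add_right (mul_le_mul_of_nonneg_left hH hc) (1 / d * Lw * ((1 - x) / (1 - γ)))
    refine hstep1.trans ?_
    -- final polynomial inequality
    have hm1 : Lw * ((1 - x) * (1 - γ)) ≤ (Lb + 2 * (-lγ)) * ((1 - x) * (1 - γ)) := by
      apply mul_le_mul_of_nonneg_right hLwle
      apply mul_nonneg (by linarith) h1γ.le
    have hn2 : Lb * (1 - x) * (1 - γ) ≤ Lb * ((1 - γ) * d) * (1 - γ) := by
      apply mul_le_mul_of_nonneg_right (mul_le_mul_of_nonneg_left hdx hLbpos.le) h1γ.le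
    have hn3 : (2 - γ) * ((-lγ) * (1 - x)) ≤ (2 - γ) * ((-lγ) * ((1 - γ) * d)) := by
      apply mul_le_mul_of_nonneg_left (mul_le_mul_of_nonneg_left hdx (by linarith)) (by linarith)
    have hn4 : (2 - γ) * ((-lγ) * x) ≤ (2 - γ) * ((-lγ) * (Q * d)) := by
      apply mul_le_mul_of_nonneg_left (mul_le_mul_of_nonneg_left hQd (by linarith)) (by linarith)
    have hn5 : (0:ℝ) ≤ 2 * x * (1 - γ) * (-lγ) := by
      apply mul_nonneg (by positivity); linarith
    have key : Lw * (1 - x) * (1 - γ) + (-lγ) * γ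
        ≤ Lb * (1 - γ) ^ 2 * d + (2 - γ) * (1 - γ) * (-lγ) * d + (2 - γ) * (-lγ) * (Q * d) := by
      linarith [hm1, hn2, hn3, hn4, hn5]
    have e1 : 1 / d * Lw * ((1 - x) / (1 - γ)) + 1 / d * (-lγ) * (γ / (1 - γ) ^ 2)
        = (Lw * (1 - x) * (1 - γ) + (-lγ) * γ) * (1 / (d * (1 - γ) ^ 2)) := by
      field_simp
    have e2 : Lb + (2 - γ) / (1 - γ) ^ 2 * ((1 - γ) + Q) * (-lγ)
        = (Lb * (1 - γ) ^ 2 * d + (2 - γ) * (1 - γ) * (-lγ) * d + (2 - γ) * (-lγ) * (Q * d))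
          * (1 / (d * (1 - γ) ^ 2)) := by
      field_simp
      ring
    rw [e1, e2]
    apply mul_le_mul_of_nonneg_right key
    positivity
  -- assemble
  have hμpos : 0 < μ := by rw [hμ]; positivity
  have hμ1 : μ - 1 = (1 - γ) / γ := by rw [hμ]; field_simp
  have hbμ : 1 / (μ - 1) = b := by rw [hμ1, hb, one_div_div]
  have hlogμ : Real.log μ = -lγ := by rw [hμ, one_div, Real.log_inv, hlγ]
  have hEeq : μ * (2 * μ - 1) / (μ - 1) ^ 2 * (γ + 2 * (1 - γ) * pstar) / (2 * pstar)
      = (2 - γ) / (1 - γ) ^ 2 * ((1 - γ) + Q) := by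
    rw [hμ1, hμ, hQ]
    field_simp
    ring
  have hexp : (1 / (μ - 1)) *
      μ ^ ((μ * (2 * μ - 1) / (μ - 1) ^ 2) * (γ + 2 * (1 - γ) * pstar) / (2 * pstar))
      = Real.exp (Lb + (2 - γ) / (1 - γ) ^ 2 * ((1 - γ) + Q) * (-lγ)) := by
    rw [hbμ, Real.rpow_def_of_pos hμpos, Real.exp_add, hLb, Real.exp_log hbpos]
    congr 1
    rw [hlogμ, hEeq]
    ring
  calc ∏ i ∈ Finset.range (k + 1), (2 * p i) ^ (1 / (2 * γ ^ i * p 0))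
      ≤ ∏ i ∈ Finset.range (k + 1), (γ ^ i * A) ^ (1 / (2 * γ ^ i * p 0)) := by
        apply Finset.prod_le_prod
        · intro i hi
          have := h2pi i (Nat.lt_succ_iff.mp (Finset.mem_range.mp hi))
          exact Real.rpow_nonneg (by linarith) _
        · intro i hi
          have h1 := h2pi i (Nat.lt_succ_iff.mp (Finset.mem_range.mp hi))
          exact Real.rpow_le_rpow (by linarith) (by rw [hclosed i]; linarith) (by positivity)
    _ = Real.exp (∑ i ∈ Finset.range (k + 1), 1 / (2 * γ ^ i * p 0) * Real.log (γ ^ i * A)) := by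
        rw [Real.exp_sum]
        apply Finset.prod_congr rfl
        intro i _
        rw [Real.rpow_def_of_pos (mul_pos (pow_pos hγ0 i) hApos), mul_comm]
    _ ≤ Real.exp (Lb + (2 - γ) / (1 - γ) ^ 2 * ((1 - γ) + Q) * (-lγ)) :=
        Real.exp_le_exp.mpr hsum_le
    _ = (1 / (μ - 1)) *
        μ ^ ((μ * (2 * μ - 1) / (μ - 1) ^ 2) * (γ + 2 * (1 - γ) * pstar) / (2 * pstar)) :=
        hexp.symm
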